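/- Let θ ∈ C²(ℝ^d) have modulus of continuity ω (a nondecreasing continuous function with ω(0)=0, C² on (0,∞)), and suppose θ(x₀) − θ(y₀) = ω(|x₀−y₀|) for some x₀ ≠ y₀ with x₀ − y₀ = ξ·e₁, ξ > 0. Then ∂₁θ(x₀) = ∂₁θ(y₀) = ω'(ξ), ∂_jθ(x₀) = ∂_jθ(y₀) = 0 for j ≠ 1, and Δθ(x₀) − Δθ(y₀) ≤ 4ω''(ξ). -/

import Mathlib

open Real Set Filter

lemma aux_max_zero {h : ℝ → ℝ} {c : ℝ} (hd : HasDerivAt h c 0) (h0 : h 0 = 0)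
    (hle : ∀ᶠ t in nhds (0:ℝ), h t ≤ 0) : c = 0 := by
  have hm : IsLocalMax h 0 := by
    filter_upwards [hle] with t ht; simpa [h0] using ht
  have := hm.deriv_eq_zero
  rwa [hd.deriv] at this

lemma aux_second_nonneg {h h' : ℝ → ℝ} {c : ℝ}
    (hd : ∀ᶠ t in nhds (0:ℝ), HasDerivAt h (h' t) t)
    (hd2 : HasDerivAt h' c 0)
    (h0 : h 0 = 0) (hpos : ∀ᶠ t in nhds (0:ℝ), 0 ≤ h t) : 0 ≤ c := by
  by_contra hc
  push_neg at hc
  have hd0 : HasDerivAt h (h' 0) 0 := hd.self_of_nhds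
  have h'0 : h' 0 = 0 := by
    have hm : IsLocalMin h 0 := by
      filter_upwards [hpos] with t ht; simpa [h0] using ht
    have := hm.deriv_eq_zero
    rwa [hd0.deriv] at this
  have hslope := hasDerivAt_iff_tendsto_slope.mp hd2
  have hev : ∀ᶠ t in nhdsWithin (0:ℝ) (Set.Ioi 0), h' t < 0 := by
    have h2 : ∀ᶠ t in nhdsWithin (0:ℝ) {(0:ℝ)}ᶜ, slope h' 0 t < c / 2 :=
      hslope.eventually_lt_const (by linarith)
    have h3 : nhdsWithin (0:ℝ) (Set.Ioi 0) ≤ nhdsWithin (0:ℝ) {(0:ℝ)}ᶜ :=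
      nhdsWithin_mono 0 (fun x hx => ne_of_gt hx)
    filter_upwards [h3 h2, self_mem_nhdsWithin] with t ht ht0
    have htpos : (0:ℝ) < t := ht0
    rw [slope_def_field, h'0] at ht
    have h4 : h' t / t < c / 2 := by simpa using ht
    have h5 : h' t < c / 2 * t := (div_lt_iff₀ htpos).mp h4
    have h6 : c / 2 * t < 0 := mul_neg_of_neg_of_pos (by linarith) htpos
    linarith
  have hall : ∀ᶠ t in nhdsWithin (0:ℝ) (Set.Ioi 0),
      (HasDerivAt h (h' t) t ∧ 0 ≤ h t) ∧ h' t < 0 :=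
    ((hd.and hpos).filter_mono nhdsWithin_le_nhds).and hev
  rw [eventually_iff] at hall
  obtain ⟨δ, hδ0, hδsub⟩ := mem_nhdsGT_iff_exists_Ioc_subset.mp hall
  have hδ0' : (0:ℝ) < δ := hδ0
  have hcont : ContinuousOn h (Set.Icc 0 δ) := by
    intro t ht
    rcases eq_or_lt_of_le ht.1 with rfl | htpos
    · exact hd0.continuousAt.continuousWithinAt
    · exact ((hδsub ⟨htpos, ht.2⟩).1.1).continuousAt.continuousWithinAt
  have hanti : StrictAntiOn h (Set.Icc 0 δ) := by
    apply strictAntiOn_of_deriv_neg (convex_Icc 0 δ) hcont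
    intro t ht
    rw [interior_Icc] at ht
    have hmem := hδsub ⟨ht.1, ht.2.le⟩
    rw [hmem.1.1.deriv]
    exact hmem.2
  have h1 : h δ < h 0 :=
    hanti (Set.left_mem_Icc.mpr hδ0'.le) (Set.right_mem_Icc.mpr hδ0'.le) hδ0'
  have h2 : 0 ≤ h δ := (hδsub ⟨hδ0', le_refl δ⟩).1.2
  rw [h0] at h1; linarith

lemma aux_line {E : Type*} [NormedAddCommGroup E] [NormedSpace ℝ E] {θ : E → ℝ}
    (hθ : Differentiable ℝ θ) (a u : E) (t : ℝ) :
    HasDerivAt (fun s : ℝ => θ (a + s • u)) (fderiv ℝ θ (a + t • u) u) t := by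
  have hline : HasDerivAt (fun s : ℝ => a + s • u) u t := by
    simpa using ((hasDerivAt_id t).smul_const u).const_add a
  simpa [Function.comp_def] using (hθ (a + t • u)).hasFDerivAt.comp_hasDerivAt t hline

lemma aux_line2 {E : Type*} [NormedAddCommGroup E] [NormedSpace ℝ E] {θ : E → ℝ}
    (hθ1 : Differentiable ℝ (fderiv ℝ θ)) (a u : E) :
    HasDerivAt (fun s : ℝ => fderiv ℝ θ (a + s • u) u) (fderiv ℝ (fderiv ℝ θ) a u u) 0 := by
  have hline : HasDerivAt (fun s : ℝ => a + s • u) u 0 := by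
    simpa using ((hasDerivAt_id (0:ℝ)).smul_const u).const_add a
  have h1 : HasDerivAt (fun s : ℝ => fderiv ℝ θ (a + s • u)) (fderiv ℝ (fderiv ℝ θ) a u) 0 := by
    simpa [Function.comp_def] using (hθ1 (a + (0:ℝ) • u)).hasFDerivAt.comp_hasDerivAt 0 hline
  simpa using h1.clm_apply (hasDerivAt_const (0:ℝ) u)

/-- First and second order information at a breakthrough point where a `C²` scalar
function touches its modulus of continuity. -/
theorem breakthrough_point_derivatives (d : ℕ) (hd : 1 ≤ d)
    (θ : EuclideanSpace ℝ (Fin d) → ℝ) (hθ : ContDiff ℝ 2 θ)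
    (ω : ℝ → ℝ) (hωc : Continuous ω) (hωmono : MonotoneOn ω (Ici 0)) (hω0 : ω 0 = 0)
    (hω2 : ContDiffOn ℝ 2 ω (Ioi 0))
    (hmod : ∀ x y, |θ x - θ y| ≤ ω ‖x - y‖)
    (x0 y0 : EuclideanSpace ℝ (Fin d)) (ξ : ℝ) (hξ : 0 < ξ)
    (hxy : x0 - y0 = ξ • (EuclideanSpace.single (⟨0, by omega⟩ : Fin d) (1:ℝ)))
    (htouch : θ x0 - θ y0 = ω ξ) :
    fderiv ℝ θ x0 (EuclideanSpace.single (⟨0, by omega⟩ : Fin d) 1) = deriv ω ξ ∧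
    fderiv ℝ θ y0 (EuclideanSpace.single (⟨0, by omega⟩ : Fin d) 1) = deriv ω ξ ∧
    (∀ j : Fin d, j ≠ (⟨0, by omega⟩ : Fin d) →
      fderiv ℝ θ x0 (EuclideanSpace.single j 1) = 0 ∧
      fderiv ℝ θ y0 (EuclideanSpace.single j 1) = 0) ∧
    (∑ j, iteratedFDeriv ℝ 2 θ x0 ![EuclideanSpace.single j 1, EuclideanSpace.single j 1])
        - (∑ j, iteratedFDeriv ℝ 2 θ y0 ![EuclideanSpace.single j 1, EuclideanSpace.single j 1])
      ≤ 4 * deriv (deriv ω) ξ := by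
  have hθd : Differentiable ℝ θ := hθ.differentiable (by norm_num)
  have hθ1 : Differentiable ℝ (fderiv ℝ θ) :=
    (hθ.fderiv_right (m := 1) (by norm_num)).differentiable (by norm_num)
  have hω' : ∀ s : ℝ, 0 < s → HasDerivAt ω (deriv ω s) s := fun s hs =>
    ((hω2.contDiffAt (isOpen_Ioi.mem_nhds hs)).differentiableAt (by norm_num)).hasDerivAt
  have hω'' : HasDerivAt (deriv ω) (deriv (deriv ω) ξ) ξ := by
    have h1 : ContDiffOn ℝ 1 (deriv ω) (Ioi 0) := hω2.deriv_of_isOpen isOpen_Ioi (by norm_num)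
    exact ((h1.contDiffAt (isOpen_Ioi.mem_nhds hξ)).differentiableAt (by norm_num)).hasDerivAt
  have hmod' : ∀ x y : EuclideanSpace ℝ (Fin d), θ x - θ y ≤ ω ‖x - y‖ := fun x y =>
    le_trans (le_abs_self _) (hmod x y)
  suffices H : ∀ i0 : Fin d, ∀ hxy : x0 - y0 = ξ • EuclideanSpace.single i0 1,
      ∀ htouch : θ x0 - θ y0 = ω ξ,
      (fderiv ℝ θ x0 (EuclideanSpace.single i0 1) = deriv ω ξ ∧
       fderiv ℝ θ y0 (EuclideanSpace.single i0 1) = deriv ω ξ ∧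
       (∀ j : Fin d, j ≠ i0 →
          fderiv ℝ θ x0 (EuclideanSpace.single j 1) = 0 ∧
          fderiv ℝ θ y0 (EuclideanSpace.single j 1) = 0) ∧
       (∑ j, iteratedFDeriv ℝ 2 θ x0 ![EuclideanSpace.single j 1, EuclideanSpace.single j 1])
          - (∑ j, iteratedFDeriv ℝ 2 θ y0 ![EuclideanSpace.single j 1, EuclideanSpace.single j 1])
        ≤ 4 * deriv (deriv ω) ξ) by
    exact H _ hxy htouch
  intro i0 hxy htouch
  set e : EuclideanSpace ℝ (Fin d) := EuclideanSpace.single i0 1 with he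
  have hne : ‖e‖ = 1 := by rw [he]; simp
  -- first derivative at x0
  have hx1 : fderiv ℝ θ x0 e = deriv ω ξ := by
    have hωa : HasDerivAt (fun t : ℝ => ω (ξ + t)) (deriv ω ξ) 0 := by
      have h0 : HasDerivAt ω (deriv ω ξ) ((fun t : ℝ => ξ + t) 0) := by
        simpa using hω' ξ hξ
      simpa [Function.comp_def] using h0.comp 0 ((hasDerivAt_id (0:ℝ)).const_add ξ)
    have h1 : HasDerivAt (fun t : ℝ => θ (x0 + t • e)) (fderiv ℝ θ x0 e) 0 := by
      simpa using aux_line hθd x0 e 0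
    have hF : HasDerivAt (fun t : ℝ => θ (x0 + t • e) - θ y0 - ω (ξ + t))
        (fderiv ℝ θ x0 e - deriv ω ξ) 0 := (h1.sub_const (θ y0)).sub hωa
    have h00 : θ (x0 + (0:ℝ) • e) - θ y0 - ω (ξ + 0) = 0 := by
      simp only [zero_smul, add_zero]; rw [htouch, sub_self]
    have hev : ∀ᶠ t in nhds (0:ℝ), θ (x0 + t • e) - θ y0 - ω (ξ + t) ≤ 0 := by
      filter_upwards [Ioo_mem_nhds (show -ξ < (0:ℝ) by linarith) hξ] with t ht
      have hxx : x0 + t • e - y0 = (ξ + t) • e := by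
        rw [add_sub_right_comm, hxy, ← add_smul]
      have := hmod' (x0 + t • e) y0
      rw [hxx, norm_smul, hne, mul_one, Real.norm_eq_abs,
        abs_of_pos (show 0 < ξ + t by have := ht.1; linarith)] at this
      linarith
    have := aux_max_zero hF h00 hev
    linarith
  -- first derivative at y0
  have hy1 : fderiv ℝ θ y0 e = deriv ω ξ := by
    have hωa : HasDerivAt (fun t : ℝ => ω (ξ - t)) (deriv ω ξ * (-1)) 0 := by
      have h0 : HasDerivAt ω (deriv ω ξ) ((fun t : ℝ => ξ - t) 0) := by
        simpa using hω' ξ hξ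
      simpa [Function.comp_def] using h0.comp 0 (HasDerivAt.const_sub ξ (hasDerivAt_id (0:ℝ)))
    have h1 : HasDerivAt (fun t : ℝ => θ (y0 + t • e)) (fderiv ℝ θ y0 e) 0 := by
      simpa using aux_line hθd y0 e 0
    have hF : HasDerivAt (fun t : ℝ => θ x0 - θ (y0 + t • e) - ω (ξ - t))
        (-(fderiv ℝ θ y0 e) - deriv ω ξ * (-1)) 0 :=
      (HasDerivAt.const_sub (θ x0) h1).sub hωa
    have h00 : θ x0 - θ (y0 + (0:ℝ) • e) - ω (ξ - 0) = 0 := by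
      simp only [zero_smul, add_zero, sub_zero]; rw [htouch, sub_self]
    have hev : ∀ᶠ t in nhds (0:ℝ), θ x0 - θ (y0 + t • e) - ω (ξ - t) ≤ 0 := by
      filter_upwards [Ioo_mem_nhds (show -ξ < (0:ℝ) by linarith) hξ] with t ht
      have hxx : x0 - (y0 + t • e) = (ξ - t) • e := by
        rw [sub_add_eq_sub_sub, hxy, ← sub_smul]
      have := hmod' x0 (y0 + t • e)
      rw [hxx, norm_smul, hne, mul_one, Real.norm_eq_abs,
        abs_of_pos (show 0 < ξ - t by have := ht.2; linarith)] at this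
      linarith
    have := aux_max_zero hF h00 hev
    linarith
  -- transverse first derivatives
  have h3 : ∀ j : Fin d, j ≠ i0 →
      fderiv ℝ θ x0 (EuclideanSpace.single j 1) = 0 ∧
      fderiv ℝ θ y0 (EuclideanSpace.single j 1) = 0 := by
    intro j hj
    set v : EuclideanSpace ℝ (Fin d) := EuclideanSpace.single j 1 with hv
    have hvn : ‖v‖ = 1 := by rw [hv]; simp
    have hiv : inner ℝ e v = 0 := by
      rw [he, hv, EuclideanSpace.inner_single_left]
      simp [EuclideanSpace.single_apply, Ne.symm hj]
    have hov : ∀ s : ℝ, ‖ξ • e + s • v‖ = Real.sqrt (ξ^2 + s^2) := by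
      intro s
      have hinner : inner ℝ (ξ • e) (s • v) = 0 := by
        rw [real_inner_smul_left, real_inner_smul_right, hiv]; ring
      have hsq : ‖ξ • e + s • v‖^2 = ξ^2 + s^2 := by
        rw [norm_add_sq_real, hinner, norm_smul, norm_smul, hne, hvn]
        simp [sq_abs]
      rw [← hsq, Real.sqrt_sq (norm_nonneg _)]
    have hne0 : ξ^2 + (0:ℝ)^2 ≠ 0 := by positivity
    have hsqrt : HasDerivAt (fun t : ℝ => Real.sqrt (ξ^2 + t^2)) 0 0 := by
      have h1 : HasDerivAt (fun t : ℝ => ξ^2 + t^2) 0 0 := by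
        simpa using HasDerivAt.const_add (ξ^2) (hasDerivAt_pow 2 (0:ℝ))
      have h2 := Real.hasDerivAt_sqrt hne0
      simpa [Function.comp_def] using h2.comp 0 h1
    have hs0 : Real.sqrt (ξ^2 + (0:ℝ)^2) = ξ := by
      rw [show ξ^2 + (0:ℝ)^2 = ξ^2 by ring, Real.sqrt_sq hξ.le]
    have hω0' : HasDerivAt ω (deriv ω ξ) (Real.sqrt (ξ^2 + (0:ℝ)^2)) := by
      rw [hs0]; exact hω' ξ hξ
    have hωsq : HasDerivAt (fun t : ℝ => ω (Real.sqrt (ξ^2 + t^2))) 0 0 := by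
      simpa [Function.comp_def] using hω0'.comp 0 hsqrt
    constructor
    · have h1 : HasDerivAt (fun t : ℝ => θ (x0 + t • v)) (fderiv ℝ θ x0 v) 0 := by
        simpa using aux_line hθd x0 v 0
      have hF : HasDerivAt (fun t : ℝ => θ (x0 + t • v) - θ y0 - ω (Real.sqrt (ξ^2 + t^2)))
          (fderiv ℝ θ x0 v - 0) 0 := (h1.sub_const (θ y0)).sub hωsq
      have h00 : θ (x0 + (0:ℝ) • v) - θ y0 - ω (Real.sqrt (ξ^2 + (0:ℝ)^2)) = 0 := by
        rw [hs0]; simp only [zero_smul, add_zero]; rw [htouch, sub_self]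
      have hev : ∀ᶠ t in nhds (0:ℝ),
          θ (x0 + t • v) - θ y0 - ω (Real.sqrt (ξ^2 + t^2)) ≤ 0 := by
        filter_upwards with t
        have hxx : x0 + t • v - y0 = ξ • e + t • v := by rw [add_sub_right_comm, hxy]
        have := hmod' (x0 + t • v) y0
        rw [hxx, hov t] at this
        linarith
      have := aux_max_zero hF h00 hev
      linarith
    · have h1 : HasDerivAt (fun t : ℝ => θ (y0 + t • v)) (fderiv ℝ θ y0 v) 0 := by
        simpa using aux_line hθd y0 v 0
      have hF : HasDerivAt (fun t : ℝ => θ x0 - θ (y0 + t • v) - ω (Real.sqrt (ξ^2 + t^2)))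
          (-(fderiv ℝ θ y0 v) - 0) 0 := (HasDerivAt.const_sub (θ x0) h1).sub hωsq
      have h00 : θ x0 - θ (y0 + (0:ℝ) • v) - ω (Real.sqrt (ξ^2 + (0:ℝ)^2)) = 0 := by
        rw [hs0]; simp only [zero_smul, add_zero]; rw [htouch, sub_self]
      have hev : ∀ᶠ t in nhds (0:ℝ),
          θ x0 - θ (y0 + t • v) - ω (Real.sqrt (ξ^2 + t^2)) ≤ 0 := by
        filter_upwards with t
        have hxx : x0 - (y0 + t • v) = ξ • e + (-t) • v := by
          rw [sub_add_eq_sub_sub, hxy, neg_smul, ← sub_eq_add_neg]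
        have := hmod' x0 (y0 + t • v)
        rw [hxx, hov (-t), neg_sq] at this
        linarith
      have := aux_max_zero hF h00 hev
      linarith
  -- second order, transverse
  have hQne : ∀ j : Fin d, j ≠ i0 →
      fderiv ℝ (fderiv ℝ θ) x0 (EuclideanSpace.single j 1) (EuclideanSpace.single j 1)
        - fderiv ℝ (fderiv ℝ θ) y0 (EuclideanSpace.single j 1) (EuclideanSpace.single j 1)
        ≤ 0 := by
    intro j hj
    set v : EuclideanSpace ℝ (Fin d) := EuclideanSpace.single j 1 with hv
    have hn : ∀ t : ℝ, ‖x0 + t • v - (y0 + t • v)‖ = ξ := by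
      intro t
      have hxx : x0 + t • v - (y0 + t • v) = x0 - y0 := by abel
      rw [hxx, hxy, norm_smul, hne, mul_one, Real.norm_eq_abs, abs_of_pos hξ]
    have hdd : ∀ t : ℝ, HasDerivAt
        (fun s : ℝ => ω ξ - (θ (x0 + s • v) - θ (y0 + s • v)))
        (-(fderiv ℝ θ (x0 + t • v) v - fderiv ℝ θ (y0 + t • v) v)) t := fun t =>
      HasDerivAt.const_sub (ω ξ) ((aux_line hθd x0 v t).sub (aux_line hθd y0 v t))
    have hd2 : HasDerivAt
        (fun t : ℝ => -(fderiv ℝ θ (x0 + t • v) v - fderiv ℝ θ (y0 + t • v) v))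
        (-(fderiv ℝ (fderiv ℝ θ) x0 v v - fderiv ℝ (fderiv ℝ θ) y0 v v)) 0 :=
      ((aux_line2 hθ1 x0 v).sub (aux_line2 hθ1 y0 v)).neg
    have h00 : ω ξ - (θ (x0 + (0:ℝ) • v) - θ (y0 + (0:ℝ) • v)) = 0 := by
      simp only [zero_smul, add_zero]; rw [htouch, sub_self]
    have hpos : ∀ᶠ t in nhds (0:ℝ), 0 ≤ ω ξ - (θ (x0 + t • v) - θ (y0 + t • v)) := by
      filter_upwards with t
      have := hmod' (x0 + t • v) (y0 + t • v)
      rw [hn t] at this; linarith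
    have := aux_second_nonneg (Filter.Eventually.of_forall hdd) hd2 h00 hpos
    linarith
  -- second order, along e
  have hQ0 : fderiv ℝ (fderiv ℝ θ) x0 e e - fderiv ℝ (fderiv ℝ θ) y0 e e
      ≤ 4 * deriv (deriv ω) ξ := by
    have haff : ∀ t : ℝ, HasDerivAt (fun s : ℝ => ξ + 2 * s) 2 t := by
      intro t
      simpa using HasDerivAt.const_add ξ (HasDerivAt.const_mul 2 (hasDerivAt_id t))
    have hdd : ∀ᶠ t in nhds (0:ℝ), HasDerivAt
        (fun s : ℝ => ω (ξ + 2 * s) - (θ (x0 + s • e) - θ (y0 + s • (-e))))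
        ((fun t : ℝ => deriv ω (ξ + 2 * t) * 2
          - (fderiv ℝ θ (x0 + t • e) e - fderiv ℝ θ (y0 + t • (-e)) (-e))) t) t := by
      filter_upwards [Ioo_mem_nhds (show -(ξ/2) < (0:ℝ) by linarith)
        (show (0:ℝ) < ξ/2 by linarith)] with t ht
      have hpos : 0 < ξ + 2 * t := by have := ht.1; linarith
      have h1 : HasDerivAt (fun s : ℝ => ω (ξ + 2 * s)) (deriv ω (ξ + 2 * t) * 2) t := by
        have h0 : HasDerivAt ω (deriv ω (ξ + 2 * t)) ((fun s : ℝ => ξ + 2 * s) t) :=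
          hω' (ξ + 2 * t) hpos
        simpa [Function.comp_def] using h0.comp t (haff t)
      exact h1.sub ((aux_line hθd x0 e t).sub (aux_line hθd y0 (-e) t))
    have hd2 : HasDerivAt
        (fun t : ℝ => deriv ω (ξ + 2 * t) * 2
          - (fderiv ℝ θ (x0 + t • e) e - fderiv ℝ θ (y0 + t • (-e)) (-e)))
        (deriv (deriv ω) ξ * 2 * 2
          - (fderiv ℝ (fderiv ℝ θ) x0 e e - fderiv ℝ (fderiv ℝ θ) y0 (-e) (-e))) 0 := by
      have h1 : HasDerivAt (fun t : ℝ => deriv ω (ξ + 2 * t) * 2)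
          (deriv (deriv ω) ξ * 2 * 2) 0 := by
        have h0 : HasDerivAt (deriv ω) (deriv (deriv ω) ξ) ((fun s : ℝ => ξ + 2 * s) 0) := by
          simpa using hω''
        simpa [Function.comp] using (h0.comp 0 (haff 0)).mul_const 2
      exact h1.sub ((aux_line2 hθ1 x0 e).sub (aux_line2 hθ1 y0 (-e)))
    have h00 : ω (ξ + 2 * 0) - (θ (x0 + (0:ℝ) • e) - θ (y0 + (0:ℝ) • (-e))) = 0 := by
      simp only [zero_smul, add_zero, mul_zero]; rw [htouch, sub_self]
    have hpos : ∀ᶠ t in nhds (0:ℝ),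
        0 ≤ ω (ξ + 2 * t) - (θ (x0 + t • e) - θ (y0 + t • (-e))) := by
      filter_upwards [Ioo_mem_nhds (show -(ξ/2) < (0:ℝ) by linarith)
        (show (0:ℝ) < ξ/2 by linarith)] with t ht
      have hxx : x0 + t • e - (y0 + t • (-e)) = (ξ + 2 * t) • e := by
        have h1 : x0 + t • e - (y0 + t • (-e)) = (x0 - y0) + (2 * t) • e := by
          rw [smul_neg, two_mul, add_smul]; abel
        rw [h1, hxy, ← add_smul]
      have := hmod' (x0 + t • e) (y0 + t • (-e))
      rw [hxx, norm_smul, hne, mul_one, Real.norm_eq_abs,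
        abs_of_pos (show 0 < ξ + 2 * t by have := ht.1; linarith)] at this
      linarith
    have hkey := aux_second_nonneg hdd hd2 h00 hpos
    have hneg : fderiv ℝ (fderiv ℝ θ) y0 (-e) (-e) = fderiv ℝ (fderiv ℝ θ) y0 e e := by
      rw [map_neg, map_neg, ContinuousLinearMap.neg_apply, neg_neg]
    rw [hneg] at hkey
    linarith
  refine ⟨hx1, hy1, h3, ?_⟩
  simp only [iteratedFDeriv_two_apply, Matrix.cons_val_zero, Matrix.cons_val_one, Matrix.head_cons]
  rw [← Finset.sum_sub_distrib]
  have hle : ∀ j ∈ Finset.univ,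
      fderiv ℝ (fderiv ℝ θ) x0 (EuclideanSpace.single j 1) (EuclideanSpace.single j 1)
        - fderiv ℝ (fderiv ℝ θ) y0 (EuclideanSpace.single j 1) (EuclideanSpace.single j 1)
      ≤ (if j = i0 then 4 * deriv (deriv ω) ξ else 0) := by
    intro j _
    by_cases hji : j = i0
    · subst hji
      rw [if_pos rfl, ← he]
      exact hQ0
    · rw [if_neg hji]
      exact hQne j hji
  calc _ ≤ ∑ j : Fin d, (if j = i0 then 4 * deriv (deriv ω) ξ else 0) :=
        Finset.sum_le_sum hle
    _ = 4 * deriv (deriv ω) ξ := by simp
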